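/- arXiv:2306.05930 — 6 statements merged into one kernel-verified Lean document; each statement's English description precedes it below -/
import Mathlib

section
/- Let B be a d×d real matrix (d ≥ 1) with all entries positive, and let x, v ∈ ℝ^d have all coordinates positive. Then d_H(Bx, v) ≤ L(B)·d_H(x, v) + d_H(Bv, v), where L(B) = (1 − √ψ(B))/(1 + √ψ(B)) and ψ(B) = min_{i,j,k,ℓ} (b_{ik} b_{jℓ})/(b_{iℓ} b_{jk}). -/
/-- Hilbert's pseudo-metric on the positive orthant of `ℝ^d`:
`d_H(x, y) = log( max_i (x_i / y_i) / min_i (x_i / y_i) )`. -/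
noncomputable def hilbertDist {d : ℕ} (x y : Fin d → ℝ) : ℝ :=
  Real.log ((⨆ i, x i / y i) / (⨅ i, x i / y i))

/-- `ψ(B) = min_{i,j,k,ℓ} (b_{ik} b_{jℓ}) / (b_{iℓ} b_{jk})`. -/
noncomputable def psi {d : ℕ} (B : Matrix (Fin d) (Fin d) ℝ) : ℝ :=
  ⨅ i, ⨅ j, ⨅ k, ⨅ l, (B i k * B j l) / (B i l * B j k)

/-- Birkhoff's contraction coefficient `L(B) = (1 − √ψ(B)) / (1 + √ψ(B))`. -/
noncomputable def birkhoffL {d : ℕ} (B : Matrix (Fin d) (Fin d) ℝ) : ℝ :=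
  (1 - Real.sqrt (psi B)) / (1 + Real.sqrt (psi B))

section aux
variable {ι : Type*} [Finite ι] [Nonempty ι]

lemma iInf_pos'' (f : ι → ℝ) (hf : ∀ i, 0 < f i) : 0 < ⨅ i, f i := by
  obtain ⟨i₀, hi₀⟩ := Finite.exists_min f
  exact lt_of_lt_of_le (hf i₀) (le_ciInf hi₀)

omit [Nonempty ι] in
lemma ciInf_le'' (f : ι → ℝ) (i : ι) : (⨅ j, f j) ≤ f i :=
  ciInf_le (Set.Finite.bddBelow (Set.finite_range f)) i

omit [Nonempty ι] in
lemma le_ciSup'' (f : ι → ℝ) (i : ι) : f i ≤ ⨆ j, f j :=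
  le_ciSup (Set.Finite.bddAbove (Set.finite_range f)) i
end aux

lemma keyQuadratic (a b Q : ℝ) (ha : 1 ≤ a) (hb : 1 ≤ b) :
    (a+b)^2 * (1+(a^2*b^2-1)*Q) ≤ (a*b+1)^2 * ((1+(b^2-1)*Q) * (1+(a^2-1)*Q)) := by
  nlinarith [mul_nonneg (mul_nonneg (by nlinarith : (0:ℝ) ≤ a^2-1) (by nlinarith : (0:ℝ) ≤ b^2-1)) (sq_nonneg ((a*b+1)*Q - 1))]

lemma keyScalar (a b P Q : ℝ) (ha : 1 ≤ a) (hb : 1 ≤ b)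
    (hP0 : 0 ≤ P) (hP1 : P ≤ 1) (hQ0 : 0 ≤ Q) (hQ1 : Q ≤ 1)
    (hcon : P * (1 - Q) ≤ a^2 * (Q * (1 - P))) :
    (a+b)^2 * (1 + (b^2-1)*P) ≤ (a*b+1)^2 * (1 + (b^2-1)*Q) := by
  have hZ : 0 < 1 + (a^2-1)*Q := by
    nlinarith [mul_nonneg (show (0:ℝ) ≤ a^2-1 by nlinarith) hQ0]
  have h1 : (1 + (b^2-1)*P) * (1 + (a^2-1)*Q) ≤ 1 + (a^2*b^2-1)*Q := by
    nlinarith [mul_le_mul_of_nonneg_left hcon (show (0:ℝ) ≤ b^2-1 by nlinarith)]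
  have h2 := keyQuadratic a b Q ha hb
  have h3 : (a+b)^2 * (1 + (b^2-1)*P) * (1 + (a^2-1)*Q) ≤
      (a*b+1)^2 * (1 + (b^2-1)*Q) * (1 + (a^2-1)*Q) := by nlinarith [sq_nonneg (a+b)]
  exact le_of_mul_le_mul_right h3 hZ

lemma keyScalar2 (a b m M U S X Y : ℝ) (ha : 1 ≤ a) (hb : 1 ≤ b) (hb2 : b^2 = M/m)
    (hm : 0 < m) (hU : 0 < U) (hS : 0 < S) (hmM : m ≤ M)
    (hXU : m*U ≤ X) (hXM : X ≤ M*U) (hYS : m*S ≤ Y) (hYM : Y ≤ M*S)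
    (hconC : (X - m*U)*(M*S - Y) ≤ a^2*((Y - m*S)*(M*U - X))) :
    X * S * (a+b)^2 ≤ (a*b+1)^2 * (U*Y) := by
  rcases eq_or_lt_of_le hmM with hMeq | hMlt
  · have hXe : X = m * U := le_antisymm (by rw [← hMeq] at hXM; exact hXM) hXU
    have hYe : Y = m * S := le_antisymm (by rw [← hMeq] at hYM; exact hYM) hYS
    rw [hXe, hYe]
    have hK1 : (a+b)^2 ≤ (a*b+1)^2 := by
      nlinarith [mul_nonneg (sub_nonneg.mpr ha) (sub_nonneg.mpr hb)]
    nlinarith [mul_pos (mul_pos hm hU) hS]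
  · have hMm : (0:ℝ) < M - m := sub_pos.mpr hMlt
    set P : ℝ := (X - m*U)/((M-m)*U) with hPdef
    set Q : ℝ := (Y - m*S)/((M-m)*S) with hQdef
    have hD1 : (0:ℝ) < (M-m)*U := mul_pos hMm hU
    have hD2 : (0:ℝ) < (M-m)*S := mul_pos hMm hS
    have hP0 : 0 ≤ P := div_nonneg (by linarith) hD1.le
    have hP1 : P ≤ 1 := (div_le_one hD1).mpr (by linarith [hXM])
    have hQ0 : 0 ≤ Q := div_nonneg (by linarith) hD2.le
    have hQ1 : Q ≤ 1 := (div_le_one hD2).mpr (by linarith [hYM])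
    have hcon : P * (1 - Q) ≤ a^2 * (Q * (1 - P)) := by
      have r1 : P * (1 - Q) = ((X - m*U) * (M*S - Y)) / (((M-m)*U) * ((M-m)*S)) := by
        rw [hPdef, hQdef]
        field_simp [hMm.ne', hU.ne', hS.ne']
        ring_nf
        try simp
      have r2 : a^2 * (Q * (1 - P)) = (a^2 * ((Y - m*S) * (M*U - X))) / (((M-m)*U) * ((M-m)*S)) := by
        rw [hPdef, hQdef]
        field_simp [hMm.ne', hU.ne', hS.ne']
        ring_nf
        try simp
      rw [r1, r2]
      exact (div_le_div_iff_of_pos_right (mul_pos hD1 hD2)).mpr hconC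
    have hks := keyScalar a b P Q ha hb hP0 hP1 hQ0 hQ1 hcon
    have t1 : 1 + (b^2-1)*P = X / (m*U) := by
      rw [hb2, hPdef]
      field_simp [hMm.ne', hU.ne', hm.ne']
      ring_nf
      try simp
    have t2 : 1 + (b^2-1)*Q = Y / (m*S) := by
      rw [hb2, hQdef]
      field_simp [hMm.ne', hS.ne', hm.ne']
      ring_nf
      try simp
    rw [t1, t2, ← mul_div_assoc, ← mul_div_assoc,
      div_le_div_iff₀ (by positivity) (by positivity)] at hks
    nlinarith [hks, hm, mul_pos hU hS]

lemma logLemma (a b : ℝ) (ha : 1 ≤ a) (hb : 1 ≤ b) :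
    Real.log ((a*b+1)/(a+b)) ≤ (a-1)/(a+1) * Real.log b := by
  set F : ℝ → ℝ := fun t => (a-1)/(a+1) * Real.log t - Real.log (a*t+1) + Real.log (a+t) with hF
  have hderiv : ∀ t ∈ Set.Ici (1:ℝ),
      HasDerivAt F ((a-1)/(a+1) * t⁻¹ - (a*t+1)⁻¹ * a + (a+t)⁻¹) t := by
    intro t ht
    have ht0 : (0:ℝ) < t := lt_of_lt_of_le one_pos ht
    have h1 : HasDerivAt (fun s : ℝ => (a-1)/(a+1) * Real.log s) ((a-1)/(a+1) * t⁻¹) t :=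
      (Real.hasDerivAt_log ht0.ne').const_mul _
    have hat : (0:ℝ) < a*t+1 := by nlinarith
    have h2 : HasDerivAt (fun s : ℝ => Real.log (a*s+1)) ((a*t+1)⁻¹ * a) t := by
      have hlin : HasDerivAt (fun s : ℝ => a*s+1) a t := by
        simpa using ((hasDerivAt_id t).const_mul a).add_const 1
      exact (Real.hasDerivAt_log hat.ne').comp t hlin
    have h3 : HasDerivAt (fun s : ℝ => Real.log (a+s)) ((a+t)⁻¹) t := by
      have hlin : HasDerivAt (fun s : ℝ => a+s) 1 t := by
        simpa using (hasDerivAt_id t).const_add a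
      have := (Real.hasDerivAt_log (by nlinarith : a+t ≠ 0)).comp t hlin
      rw [mul_one] at this
      exact this
    exact (h1.sub h2).add h3
  have hmono : MonotoneOn F (Set.Ici 1) := by
    apply monotoneOn_of_deriv_nonneg (convex_Ici 1)
    · exact fun t ht => ((hderiv t ht).continuousAt).continuousWithinAt
    · intro t ht
      rw [interior_Ici] at ht
      exact ((hderiv t (Set.mem_Ici.mpr (le_of_lt (show (1:ℝ) < t from ht)))).differentiableAt).differentiableWithinAt
    · intro t ht
      rw [interior_Ici] at ht
      have ht1 : (1:ℝ) < t := ht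
      have ht0 : (0:ℝ) < t := lt_trans one_pos ht1
      rw [(hderiv t (le_of_lt ht1)).deriv]
      have hat : (0:ℝ) < a*t+1 := by nlinarith
      have haT : (0:ℝ) < a+t := by nlinarith
      have ha1 : (0:ℝ) < a+1 := by nlinarith
      have hexpr : (a-1)/(a+1) * t⁻¹ - (a*t+1)⁻¹ * a + (a+t)⁻¹
          = a*(a-1)*(t-1)^2 / ((a+1)*t*(a*t+1)*(a+t)) := by
        field_simp
        ring
      rw [hexpr]
      apply div_nonneg (by nlinarith [mul_nonneg (mul_nonneg (by linarith : (0:ℝ) ≤ a)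
        (by linarith : (0:ℝ) ≤ a-1)) (sq_nonneg (t-1))])
      positivity
  have hkey : F 1 ≤ F b := hmono (Set.mem_Ici.mpr le_rfl) (Set.mem_Ici.mpr hb) hb
  have hF1 : F 1 = 0 := by
    simp only [hF, Real.log_one, mul_one, mul_zero]
    ring_nf
  have hab1 : (0:ℝ) < a*b+1 := by nlinarith
  have habs : (0:ℝ) < a+b := by nlinarith
  rw [Real.log_div hab1.ne' habs.ne']
  have hFb : F b = (a-1)/(a+1) * Real.log b - Real.log (a*b+1) + Real.log (a+b) := rfl
  rw [hF1, hFb] at hkey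
  linarith

lemma hilbertDist_triangle {d : ℕ} [Nonempty (Fin d)] (p q r : Fin d → ℝ)
    (hp : ∀ i, 0 < p i) (hq : ∀ i, 0 < q i) (hr : ∀ i, 0 < r i) :
    hilbertDist p r ≤ hilbertDist p q + hilbertDist q r := by
  have i0 : Fin d := Classical.arbitrary _
  have hIpq : 0 < ⨅ i, p i / q i := iInf_pos'' _ fun i => div_pos (hp i) (hq i)
  have hIqr : 0 < ⨅ i, q i / r i := iInf_pos'' _ fun i => div_pos (hq i) (hr i)
  have hIpr : 0 < ⨅ i, p i / r i := iInf_pos'' _ fun i => div_pos (hp i) (hr i)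
  have hSpq : 0 < ⨆ i, p i / q i := lt_of_lt_of_le hIpq ((ciInf_le'' (fun i => p i / q i) i0).trans (le_ciSup'' (fun i => p i / q i) i0))
  have hSqr : 0 < ⨆ i, q i / r i := lt_of_lt_of_le hIqr ((ciInf_le'' (fun i => q i / r i) i0).trans (le_ciSup'' (fun i => q i / r i) i0))
  have hSpr : 0 < ⨆ i, p i / r i := lt_of_lt_of_le hIpr ((ciInf_le'' (fun i => p i / r i) i0).trans (le_ciSup'' (fun i => p i / r i) i0))
  have h1 : (⨆ i, p i / r i) ≤ (⨆ i, p i / q i) * (⨆ i, q i / r i) := by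
    apply ciSup_le; intro i
    calc p i / r i = (p i / q i) * (q i / r i) := by
          rw [div_mul_div_comm, mul_comm (p i) (q i), mul_div_mul_left _ _ (hq i).ne']
      _ ≤ _ := mul_le_mul (le_ciSup'' (fun i => p i / q i) i) (le_ciSup'' (fun i => q i / r i) i) (le_of_lt (div_pos (hq i) (hr i))) (le_of_lt hSpq)
  have h2 : (⨅ i, p i / q i) * (⨅ i, q i / r i) ≤ ⨅ i, p i / r i := by
    apply le_ciInf; intro i
    calc (⨅ i, p i / q i) * (⨅ i, q i / r i) ≤ (p i / q i) * (q i / r i) :=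
          mul_le_mul (ciInf_le'' (fun i => p i / q i) i) (ciInf_le'' (fun i => q i / r i) i) (le_of_lt hIqr) (le_of_lt (div_pos (hp i) (hq i)))
      _ = p i / r i := by
          rw [div_mul_div_comm, mul_comm (p i) (q i), mul_div_mul_left _ _ (hq i).ne']
  unfold hilbertDist
  rw [← Real.log_mul (by positivity) (by positivity)]
  apply Real.log_le_log (div_pos hSpr hIpr)
  calc (⨆ i, p i / r i) / (⨅ i, p i / r i)
      ≤ ((⨆ i, p i / q i) * (⨆ i, q i / r i)) / ((⨅ i, p i / q i) * (⨅ i, q i / r i)) :=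
        div_le_div₀ (by positivity) h1 (by positivity) h2
    _ = (⨆ i, p i / q i) / (⨅ i, p i / q i) * ((⨆ i, q i / r i) / (⨅ i, q i / r i)) :=
        (div_mul_div_comm _ _ _ _).symm

/-- For a positive matrix `B` and positive vectors `x`, `v`:
`d_H(Bx, v) ≤ L(B) d_H(x, v) + d_H(Bv, v)`. -/
theorem hilbertDist_mulVec_le {d : ℕ} (hd : 1 ≤ d) (B : Matrix (Fin d) (Fin d) ℝ)
    (hB : ∀ i j, 0 < B i j) (x v : Fin d → ℝ)
    (hx : ∀ i, 0 < x i) (hv : ∀ i, 0 < v i) :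
    hilbertDist (B.mulVec x) v ≤
      birkhoffL B * hilbertDist x v + hilbertDist (B.mulVec v) v := by
  haveI : Nonempty (Fin d) := ⟨⟨0, hd⟩⟩
  have i0 : Fin d := Classical.arbitrary _
  have hmv : ∀ (w : Fin d → ℝ) i, B.mulVec w i = ∑ k, B i k * w k := fun w i => rfl
  have hBx : ∀ i, 0 < B.mulVec x i := fun i => by
    rw [hmv]
    exact Finset.sum_pos (fun k _ => mul_pos (hB i k) (hx k)) Finset.univ_nonempty
  have hBv : ∀ i, 0 < B.mulVec v i := fun i => by
    rw [hmv]
    exact Finset.sum_pos (fun k _ => mul_pos (hB i k) (hv k)) Finset.univ_nonempty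
  -- ψ facts
  have hψpos : 0 < psi B := by
    apply iInf_pos''; intro i; apply iInf_pos''; intro j
    apply iInf_pos''; intro k; apply iInf_pos''; intro l
    exact div_pos (mul_pos (hB i k) (hB j l)) (mul_pos (hB i l) (hB j k))
  have hψle : ∀ i j k l, psi B ≤ (B i k * B j l) / (B i l * B j k) := by
    intro i j k l
    refine le_trans (ciInf_le'' _ i) ?_
    refine le_trans (ciInf_le'' _ j) ?_
    refine le_trans (ciInf_le'' _ k) ?_
    exact ciInf_le'' _ l
  have hψ1 : psi B ≤ 1 := by
    have := hψle i0 i0 i0 i0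
    rwa [div_self (mul_pos (hB i0 i0) (hB i0 i0)).ne'] at this
  set a : ℝ := (Real.sqrt (psi B))⁻¹ with hadef
  have hsψ : 0 < Real.sqrt (psi B) := Real.sqrt_pos.mpr hψpos
  have hsψ1 : Real.sqrt (psi B) ≤ 1 := by
    rw [show (1:ℝ) = Real.sqrt 1 by simp]
    exact Real.sqrt_le_sqrt hψ1
  have ha : 1 ≤ a := by
    rw [hadef]
    nlinarith [mul_inv_cancel₀ hsψ.ne', inv_pos.mpr hsψ]
  have ha2 : a^2 = (psi B)⁻¹ := by
    rw [hadef, inv_pow, Real.sq_sqrt hψpos.le]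
  have hcross : ∀ i j k l, B i k * B j l ≤ a^2 * (B i l * B j k) := by
    intro i j k l
    have h1 := hψle i j l k
    have hpos : 0 < B i k * B j l := mul_pos (hB i k) (hB j l)
    have h2 : psi B * (B i k * B j l) ≤ B i l * B j k := (le_div_iff₀ hpos).mp h1
    rw [ha2, inv_mul_eq_div, le_div_iff₀ hψpos]
    nlinarith [h2]
  have hL : birkhoffL B = (a-1)/(a+1) := by
    rw [birkhoffL, hadef]
    rw [div_eq_div_iff (by positivity) (by positivity)]
    field_simp
  -- m, M, b
  set m := ⨅ i, x i / v i with hmdef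
  set M := ⨆ i, x i / v i with hMdef
  have hmpos : 0 < m := iInf_pos'' _ fun i => div_pos (hx i) (hv i)
  have hmle : ∀ k, m * v k ≤ x k := fun k => by
    have := ciInf_le'' (fun i => x i / v i) k
    rw [← hmdef] at this
    exact (le_div_iff₀ (hv k)).mp this
  have hMge : ∀ k, x k ≤ M * v k := fun k => by
    have := le_ciSup'' (fun i => x i / v i) k
    rw [← hMdef] at this
    exact (div_le_iff₀ (hv k)).mp this
  have hmM : m ≤ M := le_trans (ciInf_le'' (fun i => x i / v i) i0) (le_ciSup'' (fun i => x i / v i) i0)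
  set b : ℝ := Real.sqrt (M / m) with hbdef
  have hMm1 : 1 ≤ M / m := (one_le_div hmpos).mpr hmM
  have hb : 1 ≤ b := by
    rw [hbdef, show (1:ℝ) = Real.sqrt 1 by simp]
    exact Real.sqrt_le_sqrt hMm1
  have hb2 : b^2 = M/m := Real.sq_sqrt (by positivity)
  have hab : (0:ℝ) < a + b := by linarith
  -- key pairwise inequality
  have key : ∀ i j, B.mulVec x i * B.mulVec v j * (a+b)^2 ≤
      (a*b+1)^2 * (B.mulVec v i * B.mulVec x j) := by
    intro i j
    set U := B.mulVec v i with hU'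
    set X := B.mulVec x i with hX'
    set S := B.mulVec v j with hS'
    set Y := B.mulVec x j with hY'
    have hU : 0 < U := hBv i
    have hS : 0 < S := hBv j
    have hXU : m * U ≤ X := by
      rw [hX', hU', hmv, hmv, Finset.mul_sum]
      refine Finset.sum_le_sum fun k _ => ?_
      have := mul_le_mul_of_nonneg_left (hmle k) (le_of_lt (hB i k))
      linarith [this]
    have hXM : X ≤ M * U := by
      rw [hX', hU', hmv, hmv, Finset.mul_sum]
      refine Finset.sum_le_sum fun k _ => ?_
      have := mul_le_mul_of_nonneg_left (hMge k) (le_of_lt (hB i k))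
      linarith [this]
    have hYS : m * S ≤ Y := by
      rw [hY', hS', hmv, hmv, Finset.mul_sum]
      refine Finset.sum_le_sum fun k _ => ?_
      have := mul_le_mul_of_nonneg_left (hmle k) (le_of_lt (hB j k))
      linarith [this]
    have hYM : Y ≤ M * S := by
      rw [hY', hS', hmv, hmv, Finset.mul_sum]
      refine Finset.sum_le_sum fun k _ => ?_
      have := mul_le_mul_of_nonneg_left (hMge k) (le_of_lt (hB j k))
      linarith [this]
    have hδ : ∀ k, 0 ≤ x k - m * v k := fun k => sub_nonneg.mpr (hmle k)
    have hε : ∀ k, 0 ≤ M * v k - x k := fun k => sub_nonneg.mpr (hMge k)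
    have hconC : (X - m*U) * (M*S - Y) ≤ a^2 * ((Y - m*S) * (M*U - X)) := by
      have e1 : X - m*U = ∑ k, B i k * (x k - m*v k) := by
        rw [hX', hU', hmv, hmv, Finset.mul_sum, ← Finset.sum_sub_distrib]
        exact Finset.sum_congr rfl fun k _ => by ring
      have e2 : M*S - Y = ∑ l, B j l * (M*v l - x l) := by
        rw [hY', hS', hmv, hmv, Finset.mul_sum, ← Finset.sum_sub_distrib]
        exact Finset.sum_congr rfl fun l _ => by ring
      have e3 : Y - m*S = ∑ k, B j k * (x k - m*v k) := by
        rw [hY', hS', hmv, hmv, Finset.mul_sum, ← Finset.sum_sub_distrib]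
        exact Finset.sum_congr rfl fun k _ => by ring
      have e4 : M*U - X = ∑ l, B i l * (M*v l - x l) := by
        rw [hX', hU', hmv, hmv, Finset.mul_sum, ← Finset.sum_sub_distrib]
        exact Finset.sum_congr rfl fun l _ => by ring
      rw [e1, e2, e3, e4, Finset.sum_mul_sum, Finset.sum_mul_sum]
      simp only [Finset.mul_sum]
      refine Finset.sum_le_sum fun k _ => ?_
      refine Finset.sum_le_sum fun l _ => ?_
      calc B i k * (x k - m*v k) * (B j l * (M*v l - x l))
          = (B i k * B j l) * ((x k - m*v k) * (M*v l - x l)) := by ring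
        _ ≤ (a^2 * (B i l * B j k)) * ((x k - m*v k) * (M*v l - x l)) :=
            mul_le_mul_of_nonneg_right (hcross i j k l) (mul_nonneg (hδ k) (hε l))
        _ = a^2 * (B j k * (x k - m*v k) * (B i l * (M*v l - x l))) := by ring
    exact keyScalar2 a b m M U S X Y ha hb hb2 hmpos hU hS hmM hXU hXM hYS hYM hconC
  -- from key to Birkhoff contraction
  set K : ℝ := ((a*b+1)/(a+b))^2 with hKdef
  have hK : 0 < K := by positivity
  set R : Fin d → ℝ := fun i => B.mulVec x i / B.mulVec v i with hRdef
  have hRpos : ∀ i, 0 < R i := fun i => div_pos (hBx i) (hBv i)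
  have hIR : 0 < ⨅ j, R j := iInf_pos'' _ hRpos
  have hSR : 0 < ⨆ i, R i := lt_of_lt_of_le hIR ((ciInf_le'' R i0).trans (le_ciSup'' R i0))
  have h5 : ∀ i j, R i ≤ R j * K := by
    intro i j
    have e : R j * K = ((a*b+1)^2 * B.mulVec x j) / ((a+b)^2 * B.mulVec v j) := by
      show B.mulVec x j / B.mulVec v j * ((a*b+1)/(a+b))^2 = _
      rw [div_pow]
      field_simp
    rw [e]
    show B.mulVec x i / B.mulVec v i ≤ _
    rw [div_le_div_iff₀ (hBv i) (mul_pos (pow_pos hab 2) (hBv j))]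
    nlinarith [key i j]
  have hSle : (⨆ i, R i) ≤ K * ⨅ j, R j := by
    apply ciSup_le; intro i
    rw [← div_le_iff₀' hK]
    exact le_ciInf fun j => (div_le_iff₀ hK).mpr (h5 i j)
  have hBirk : hilbertDist (B.mulVec x) (B.mulVec v) ≤ birkhoffL B * hilbertDist x v := by
    unfold hilbertDist
    have h6 : (⨆ i, R i)/(⨅ i, R i) ≤ K := by
      rw [div_le_iff₀ hIR]
      exact hSle
    calc Real.log ((⨆ i, B.mulVec x i / B.mulVec v i) / ⨅ i, B.mulVec x i / B.mulVec v i)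
        = Real.log ((⨆ i, R i) / ⨅ i, R i) := rfl
      _ ≤ Real.log K := Real.log_le_log (div_pos hSR hIR) h6
      _ = 2 * Real.log ((a*b+1)/(a+b)) := by
          rw [hKdef, Real.log_pow]
          norm_num
      _ ≤ 2 * ((a-1)/(a+1) * Real.log b) := by
          have := logLemma a b ha hb
          linarith
      _ = (a-1)/(a+1) * Real.log (b^2) := by
          rw [Real.log_pow]
          push_cast
          ring
      _ = birkhoffL B * Real.log (M/m) := by rw [hL, hb2]
      _ = birkhoffL B * hilbertDist x v := rfl
  have htri := hilbertDist_triangle (B.mulVec x) (B.mulVec v) v hBx hBv hv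
  linarith
end

section
/- Let (A(n))_{n∈ℕ} be a sequence of d×d real matrices, each with all entries positive, converging entrywise to a matrix A with all entries positive. Let v ∈ ℝ^d have all coordinates positive and let λ ∈ ℝ satisfy A v = λ v. Then for every real r > 1 there exists N ∈ ℕ such that for all n ≥ N and every x ∈ B_r(v), the vector A(n)·x belongs to B_r(v); i.e., for n sufficiently large, A(n) maps the cone B_r(v) into itself. -/
open Filter

/-- The cone `B_r(v)`: positive vectors `x` such that `x_i v_j ≤ r x_j v_i`
for all `i, j`. -/
def coneBr {d : ℕ} (r : ℝ) (v : Fin d → ℝ) : Set (Fin d → ℝ) :=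
  {x | (∀ i, 0 < x i) ∧ ∀ i j, x i * v j ≤ r * (x j * v i)}

/-- If positive matrices `A(n)` converge entrywise to a positive matrix `A`
with positive eigenvector `v`, then for every `r > 1`, `A(n)` maps the cone
`B_r(v)` into itself for all `n` sufficiently large. -/
theorem eventually_mapsTo_coneBr {d : ℕ} (hd : 1 ≤ d)
    (A : ℕ → Matrix (Fin d) (Fin d) ℝ) (B : Matrix (Fin d) (Fin d) ℝ)
    (hApos : ∀ n, ∀ i j, 0 < A n i j) (hBpos : ∀ i j, 0 < B i j)
    (hconv : ∀ i j, Tendsto (fun n => A n i j) atTop (nhds (B i j)))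
    (v : Fin d → ℝ) (hv : ∀ i, 0 < v i) (lam : ℝ) (heig : B.mulVec v = lam • v)
    (r : ℝ) (hr : 1 < r) :
    ∃ N : ℕ, ∀ n ≥ N, ∀ x ∈ coneBr r v, (A n).mulVec x ∈ coneBr r v := by
  haveI : NeZero d := ⟨by omega⟩
  have hune : (Finset.univ : Finset (Fin d)).Nonempty := Finset.univ_nonempty
  have hr0 : (0:ℝ) < r := by linarith
  -- minimum entry of B
  obtain ⟨p, -, hp⟩ := Finset.exists_min_image (Finset.univ : Finset (Fin d × Fin d))
    (fun q => B q.1 q.2) Finset.univ_nonempty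
  set b := B p.1 p.2 with hbdef
  have hb0 : 0 < b := hBpos _ _
  have hble : ∀ i j, b ≤ B i j := fun i j => hp (i, j) (Finset.mem_univ _)
  -- min and max of v
  obtain ⟨i0, -, hvminle⟩ := Finset.exists_min_image (Finset.univ : Finset (Fin d)) v hune
  set vmin := v i0 with hvmindef
  have hvmin0 : 0 < vmin := hv i0
  have hvmin : ∀ i, vmin ≤ v i := fun i => hvminle i (Finset.mem_univ _)
  obtain ⟨i1, -, hvmaxge⟩ := Finset.exists_max_image (Finset.univ : Finset (Fin d)) v hune
  set vmax := v i1 with hvmaxdef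
  have hvmax0 : 0 < vmax := hv i1
  have hvmax : ∀ i, v i ≤ vmax := fun i => hvmaxge i (Finset.mem_univ _)
  have hr1 : (0:ℝ) < r - 1 := by linarith
  set δ := b * vmin * (r - 1) / (r * (1 + r) * vmax) with hδdef
  have hδ0 : 0 < δ := by positivity
  have hδkey : δ * (r * (1 + r) * vmax) = b * vmin * (r - 1) := by
    rw [hδdef]; field_simp
  clear_value b vmin vmax δ
  -- eventual closeness of entries
  have hev : ∀ᶠ n in atTop, ∀ i j, |A n i j - B i j| ≤ δ := by
    rw [eventually_all]
    intro i
    rw [eventually_all]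
    intro j
    obtain ⟨N, hN⟩ := Metric.tendsto_atTop.mp (hconv i j) δ hδ0
    filter_upwards [eventually_ge_atTop N] with n hn
    have h := hN n hn
    rw [Real.dist_eq] at h
    linarith
  obtain ⟨N, hN⟩ := eventually_atTop.mp hev
  refine ⟨N, fun n hn x hx => ?_⟩
  obtain ⟨hx1, hx2⟩ := hx
  have hδn := hN n hn
  -- eigen equation componentwise
  have heigc : ∀ i, ∑ k, B i k * v k = lam * v i := by
    intro i
    have := congrFun heig i
    simpa [Matrix.mulVec, dotProduct] using this
  -- minimum ratio
  obtain ⟨k0, -, hk0⟩ := Finset.exists_min_image (Finset.univ : Finset (Fin d))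
    (fun k => x k / v k) hune
  set m := x k0 / v k0 with hmdef
  have hm0 : 0 < m := div_pos (hx1 k0) (hv k0)
  have hlow : ∀ k, m * v k ≤ x k := by
    intro k
    have h := hk0 k (Finset.mem_univ _)
    rw [le_div_iff₀ (hv k)] at h
    exact h
  have hhigh : ∀ k, x k ≤ r * m * v k := by
    intro k
    have h := hx2 k k0
    have hv0 := hv k0
    rw [hmdef, show r * (x k0 / v k0) * v k = r * (x k0 * v k) / v k0 by ring,
      le_div_iff₀ hv0]
    exact h
  set V := ∑ k, v k with hVdef
  have hV0 : 0 ≤ V := Finset.sum_nonneg fun k _ => (hv k).le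
  set S1 := ∑ k, (r * m * v k - x k) with hS1def
  set S2 := ∑ k, (x k - m * v k) with hS2def
  have hS1 : 0 ≤ S1 := Finset.sum_nonneg fun k _ => by linarith [hhigh k]
  have hS2 : 0 ≤ S2 := Finset.sum_nonneg fun k _ => by linarith [hlow k]
  have hsum : S1 + S2 = (r - 1) * m * V := by
    rw [hS1def, hS2def, hVdef, ← Finset.sum_add_distrib, Finset.mul_sum]
    exact Finset.sum_congr rfl fun k _ => by ring
  clear_value m V S1 S2
  constructor
  · intro i
    have : (A n).mulVec x i = ∑ k, A n i k * x k := by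
      simp [Matrix.mulVec, dotProduct]
    rw [this]
    exact Finset.sum_pos (fun k _ => mul_pos (hApos n i k) (hx1 k)) hune
  · intro i j
    have hmv : ∀ l, (A n).mulVec x l = ∑ k, A n l k * x k := by
      intro l; simp [Matrix.mulVec, dotProduct]
    rw [hmv i, hmv j]
    -- key estimates on B sums
    have h1 : ∑ k, B i k * x k ≤ r * m * (lam * v i) - b * S1 := by
      have e1 : (∑ k, B i k * x k) + ∑ k, B i k * (r * m * v k - x k)
          = r * m * (lam * v i) := by
        rw [← heigc i, Finset.mul_sum, ← Finset.sum_add_distrib]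
        exact Finset.sum_congr rfl fun k _ => by ring
      have hb1 : b * S1 ≤ ∑ k, B i k * (r * m * v k - x k) := by
        rw [hS1def, Finset.mul_sum]
        exact Finset.sum_le_sum fun k _ =>
          mul_le_mul_of_nonneg_right (hble i k) (by linarith [hhigh k])
      linarith
    have h2 : m * (lam * v j) + b * S2 ≤ ∑ k, B j k * x k := by
      have e2 : (∑ k, B j k * x k) = m * (lam * v j) + ∑ k, B j k * (x k - m * v k) := by
        rw [← heigc j, Finset.mul_sum, ← Finset.sum_add_distrib]
        exact Finset.sum_congr rfl fun k _ => by ring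
      have hb2 : b * S2 ≤ ∑ k, B j k * (x k - m * v k) := by
        rw [hS2def, Finset.mul_sum]
        exact Finset.sum_le_sum fun k _ =>
          mul_le_mul_of_nonneg_right (hble j k) (by linarith [hlow k])
      linarith
    -- error estimates
    have hEgen : ∀ l, ∑ k, A n l k * x k ≤ (∑ k, B l k * x k) + δ * (r * m * V) := by
      intro l
      have : ∑ k, A n l k * x k ≤ ∑ k, (B l k * x k + δ * (r * m * v k)) := by
        apply Finset.sum_le_sum
        intro k _
        have habs := abs_le.mp (hδn l k)
        nlinarith [hx1 k, hhigh k, hδ0.le]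
      have e : ∑ k, (B l k * x k + δ * (r * m * v k))
          = (∑ k, B l k * x k) + δ * (r * m * V) := by
        rw [Finset.sum_add_distrib]
        congr 1
        rw [hVdef]
        rw [show δ * (r * m * ∑ k, v k) = ∑ k, δ * (r * m * v k) by
          simp only [Finset.mul_sum]]
      rw [← e]; exact this
    have hEgen' : ∀ l, (∑ k, B l k * x k) - δ * (r * m * V) ≤ ∑ k, A n l k * x k := by
      intro l
      have : ∑ k, (B l k * x k - δ * (r * m * v k)) ≤ ∑ k, A n l k * x k := by
        apply Finset.sum_le_sum
        intro k _
        have habs := abs_le.mp (hδn l k)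
        nlinarith [hx1 k, hhigh k, hδ0.le]
      have e : ∑ k, (B l k * x k - δ * (r * m * v k))
          = (∑ k, B l k * x k) - δ * (r * m * V) := by
        rw [Finset.sum_sub_distrib]
        congr 1
        rw [hVdef]
        rw [show δ * (r * m * ∑ k, v k) = ∑ k, δ * (r * m * v k) by
          simp only [Finset.mul_sum]]
      rw [← e]; exact this
    have key1 : δ * r * m * V * (r * v i + v j) ≤ b * vmin * (S1 + S2) := by
      rw [hsum]
      have hvv : r * v i + v j ≤ (1 + r) * vmax := by
        have h1 := mul_le_mul_of_nonneg_left (hvmax i) hr0.le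
        have h2 := hvmax j
        linarith
      calc δ * r * m * V * (r * v i + v j)
          ≤ δ * r * m * V * ((1 + r) * vmax) := by
            apply mul_le_mul_of_nonneg_left hvv (by positivity)
        _ = δ * (r * (1 + r) * vmax) * (m * V) := by ring
        _ = b * vmin * (r - 1) * (m * V) := by rw [hδkey]
        _ = b * vmin * ((r - 1) * m * V) := by ring
    have key2 : b * vmin * (S1 + S2) ≤ b * S1 * v j + r * (b * S2) * v i := by
      have t1 : b * vmin * S1 ≤ b * S1 * v j := by
        have h := mul_le_mul_of_nonneg_left (hvmin j) (mul_nonneg hb0.le hS1)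
        calc b * vmin * S1 = b * S1 * vmin := by ring
          _ ≤ b * S1 * v j := h
      have t2 : b * vmin * S2 ≤ r * (b * S2) * v i := by
        have hri : vmin ≤ r * v i :=
          le_trans (hvmin i) (le_mul_of_one_le_left (hv i).le hr.le)
        have h := mul_le_mul_of_nonneg_left hri (mul_nonneg hb0.le hS2)
        calc b * vmin * S2 = b * S2 * vmin := by ring
          _ ≤ b * S2 * (r * v i) := h
          _ = r * (b * S2) * v i := by ring
      linarith
    -- combine
    have hvi := (hv i).le
    have hvj := (hv j).le
    have A1 : (∑ k, A n i k * x k) * v j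
        ≤ (r * m * (lam * v i) - b * S1 + δ * (r * m * V)) * v j := by
      apply mul_le_mul_of_nonneg_right _ hvj
      linarith [hEgen i, h1]
    have A2 : r * ((m * (lam * v j) + b * S2 - δ * (r * m * V)) * v i)
        ≤ r * ((∑ k, A n j k * x k) * v i) := by
      apply mul_le_mul_of_nonneg_left _ hr0.le
      apply mul_le_mul_of_nonneg_right _ hvi
      linarith [hEgen' j, h2]
    linarith [A1, A2, key1, key2]
end

section
/- Let (A(n))_{n∈ℕ} be a sequence of invertible d×d real matrices, let e ∈ ℝ^d have all coordinates positive, and let w ∈ ℝ^d be nonzero, such that the normalized products (A(n) ⋯ A(1) A(0)) / ‖A(n) ⋯ A(1) A(0)‖ converge to the rank-one matrix e wᵀ as n → ∞ (Frobenius norm). Let U_0 ∈ ℝ^d satisfy wᵀ U_0 > 0 and define U_{n+1} = A(n) U_n for all n ∈ ℕ. Then U_n ≠ 0 for all n, the normalized vectors U_n / ‖U_n‖ (Euclidean norm) converge to e / ‖e‖ as n → ∞, and in particular there exists N such that for all n ≥ N all coordinates of U_n are positive. (If instead wᵀ U_0 < 0, then U_n / ‖U_n‖ converges to −e / ‖e‖.)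 -/
open Matrix Filter

/-- The product `A(n) A(n−1) ⋯ A(1) A(0)` of the first terms of a sequence of
matrices. -/
def prodSeq {d : ℕ} (A : ℕ → Matrix (Fin d) (Fin d) ℝ) : ℕ → Matrix (Fin d) (Fin d) ℝ
  | 0 => A 0
  | n + 1 => A (n + 1) * prodSeq A n

/-- The Frobenius norm of a real matrix. -/
noncomputable def frobNorm {d : ℕ} (M : Matrix (Fin d) (Fin d) ℝ) : ℝ :=
  Real.sqrt (∑ i, ∑ j, (M i j) ^ 2)

/-- The Euclidean norm of a vector of `ℝ^d`. -/
noncomputable def euclNorm {d : ℕ} (x : Fin d → ℝ) : ℝ :=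
  Real.sqrt (∑ i, (x i) ^ 2)

lemma euclNorm_pos {d : ℕ} {x : Fin d → ℝ} (hx : x ≠ 0) : 0 < euclNorm x := by
  have : ∃ i, x i ≠ 0 := by
    by_contra h; push_neg at h; exact hx (funext h)
  obtain ⟨i, hi⟩ := this
  exact Real.sqrt_pos.mpr (Finset.sum_pos' (fun j _ => sq_nonneg _)
    ⟨i, Finset.mem_univ i, by positivity⟩)

lemma frobNorm_pos {d : ℕ} {M : Matrix (Fin d) (Fin d) ℝ} (hM : M ≠ 0) : 0 < frobNorm M := by
  have : ∃ i j, M i j ≠ 0 := by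
    by_contra h; push_neg at h
    exact hM (by ext i j; exact h i j)
  obtain ⟨i, j, hij⟩ := this
  refine Real.sqrt_pos.mpr (Finset.sum_pos'
    (fun a _ => Finset.sum_nonneg fun b _ => sq_nonneg _)
    ⟨i, Finset.mem_univ i, Finset.sum_pos' (fun b _ => sq_nonneg _)
      ⟨j, Finset.mem_univ j, by positivity⟩⟩)

lemma tendsto_euclNorm {d : ℕ} {V : ℕ → Fin d → ℝ} {L : Fin d → ℝ}
    (h : ∀ i, Tendsto (fun n => V n i) atTop (nhds (L i))) :
    Tendsto (fun n => euclNorm (V n)) atTop (nhds (euclNorm L)) := by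
  have hs : Tendsto (fun n => ∑ i, (V n i) ^ 2) atTop (nhds (∑ i, (L i) ^ 2)) :=
    tendsto_finset_sum _ (fun i _ => (h i).pow 2)
  exact (Real.continuous_sqrt.tendsto _).comp hs

lemma euclNorm_div {d : ℕ} (x : Fin d → ℝ) {p : ℝ} (hp : 0 ≤ p) :
    euclNorm (fun i => x i / p) = euclNorm x / p := by
  unfold euclNorm
  rw [show ∑ i, (x i / p) ^ 2 = (∑ i, x i ^ 2) / p ^ 2 by
    rw [Finset.sum_div]; congr 1; ext i; ring]
  rw [Real.sqrt_div (by positivity), Real.sqrt_sq hp]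

lemma euclNorm_smul {d : ℕ} (c : ℝ) (x : Fin d → ℝ) :
    euclNorm (fun i => c * x i) = |c| * euclNorm x := by
  unfold euclNorm
  rw [show ∑ i, (c * x i) ^ 2 = c ^ 2 * ∑ i, x i ^ 2 by
    rw [Finset.mul_sum]; congr 1; ext i; ring]
  rw [Real.sqrt_mul (sq_nonneg c), Real.sqrt_sq_eq_abs]

/-- If normalized products of invertible matrices converge to `e wᵀ` with
`e > 0` and `w ≠ 0`, then for generic initial conditions (`wᵀ U_0 > 0`) the
solution of `U_{n+1} = A(n) U_n` is never zero, its direction tends to that of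
`e`, and in particular `U_n > 0` for all `n` large enough; if instead
`wᵀ U_0 < 0`, the direction tends to that of `−e`. -/
theorem generic_direction_tendsto {d : ℕ} (hd : 1 ≤ d)
    (A : ℕ → Matrix (Fin d) (Fin d) ℝ) (hinv : ∀ n, IsUnit (A n))
    (e w : Fin d → ℝ) (he : ∀ i, 0 < e i) (hw : w ≠ 0)
    (hconv : ∀ i j, Tendsto (fun n => prodSeq A n i j / frobNorm (prodSeq A n))
      atTop (nhds (e i * w j)))
    (U : ℕ → Fin d → ℝ) (hU : ∀ n, U (n + 1) = (A n).mulVec (U n)) :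
    (0 < ∑ i, w i * U 0 i →
      (∀ n, U n ≠ 0) ∧
      (∀ i, Tendsto (fun n => U n i / euclNorm (U n)) atTop
        (nhds (e i / euclNorm e))) ∧
      ∃ N : ℕ, ∀ n ≥ N, ∀ i, 0 < U n i) ∧
    ((∑ i, w i * U 0 i) < 0 →
      (∀ n, U n ≠ 0) ∧
      (∀ i, Tendsto (fun n => U n i / euclNorm (U n)) atTop
        (nhds (-e i / euclNorm e)))) := by
  set c : ℝ := ∑ i, w i * U 0 i with hcdef
  have i0 : Fin d := ⟨0, hd⟩
  have he0 : e ≠ 0 := fun h => absurd (he i0) (by rw [h]; simp)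
  have hEe : 0 < euclNorm e := euclNorm_pos he0
  have key : c ≠ 0 → (∀ n, U n ≠ 0) ∧
      (∀ i, Tendsto (fun n => U n i / euclNorm (U n)) atTop
        (nhds (c * e i / (|c| * euclNorm e)))) := by
    intro hc0
    have hU0 : U 0 ≠ 0 := by
      intro h; apply hc0; rw [hcdef, h]; simp
    have hPunit : ∀ n, IsUnit (prodSeq A n) := by
      intro n; induction n with
      | zero => exact hinv 0
      | succ n ih => exact (hinv (n + 1)).mul ih
    have hUform : ∀ n, U (n + 1) = (prodSeq A n).mulVec (U 0) := by
      intro n; induction n with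
      | zero => rw [hU 0]; rfl
      | succ n ih => rw [hU (n + 1), ih, prodSeq, ← Matrix.mulVec_mulVec]
    have hUne : ∀ n, U n ≠ 0 := by
      intro n
      cases n with
      | zero => exact hU0
      | succ n =>
        rw [hUform n]
        intro h
        apply hU0
        have hdet := (Matrix.isUnit_iff_isUnit_det _).mp (hPunit n)
        have h1 : (prodSeq A n)⁻¹ * prodSeq A n = 1 := Matrix.nonsing_inv_mul _ hdet
        calc U 0 = ((prodSeq A n)⁻¹ * prodSeq A n).mulVec (U 0) := by rw [h1]; simp
          _ = (prodSeq A n)⁻¹.mulVec ((prodSeq A n).mulVec (U 0)) := by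
              rw [Matrix.mulVec_mulVec]
          _ = 0 := by rw [h]; simp
    have hPne : ∀ n, prodSeq A n ≠ 0 := by
      intro n h
      obtain ⟨u, hu⟩ := hPunit n
      have h1 : (1 : Matrix (Fin d) (Fin d) ℝ) = 0 := by
        rw [← u.mul_inv, hu, h, Matrix.zero_mul]
      have := congrFun (congrFun h1 i0) i0
      rw [Matrix.one_apply_eq] at this
      exact one_ne_zero this
    have hp : ∀ n, 0 < frobNorm (prodSeq A n) := fun n => frobNorm_pos (hPne n)
    -- componentwise convergence of U (n+1) / p n
    have hcomp : ∀ i, Tendsto (fun n => U (n + 1) i / frobNorm (prodSeq A n))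
        atTop (nhds (c * e i)) := by
      intro i
      have heq : ∀ n, U (n + 1) i / frobNorm (prodSeq A n)
          = ∑ j, (prodSeq A n i j / frobNorm (prodSeq A n)) * U 0 j := by
        intro n
        rw [hUform n, Matrix.mulVec, dotProduct, Finset.sum_div]
        congr 1; ext j; ring
      have hlim : Tendsto (fun n => ∑ j, (prodSeq A n i j / frobNorm (prodSeq A n)) * U 0 j)
          atTop (nhds (∑ j, (e i * w j) * U 0 j)) :=
        tendsto_finset_sum _ (fun j _ => (hconv i j).mul_const (U 0 j))
      have : (∑ j, (e i * w j) * U 0 j) = c * e i := by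
        rw [hcdef, Finset.sum_mul]; exact Finset.sum_congr rfl fun j _ => by ring
      rw [← this]
      simpa only [← heq] using hlim
    -- convergence of the norm
    have hnorm : Tendsto (fun n => euclNorm (U (n + 1)) / frobNorm (prodSeq A n))
        atTop (nhds (|c| * euclNorm e)) := by
      have heq : ∀ n, euclNorm (U (n + 1)) / frobNorm (prodSeq A n)
          = euclNorm (fun i => U (n + 1) i / frobNorm (prodSeq A n)) := by
        intro n; rw [euclNorm_div _ (hp n).le]
      rw [show |c| * euclNorm e = euclNorm (fun i => c * e i) from (euclNorm_smul c e).symm]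
      simp only [heq]
      exact tendsto_euclNorm hcomp
    refine ⟨hUne, fun i => ?_⟩
    have hlim2 : Tendsto (fun n => U (n + 1) i / euclNorm (U (n + 1))) atTop
        (nhds (c * e i / (|c| * euclNorm e))) := by
      have hne : |c| * euclNorm e ≠ 0 := by positivity
      have := (hcomp i).div hnorm hne
      refine this.congr fun n => ?_
      simp only [Pi.div_apply]
      rw [div_div_div_cancel_right₀]
      exact (hp n).ne'
    exact (tendsto_add_atTop_iff_nat 1).mp hlim2
  constructor
  · intro hpos
    obtain ⟨h1, h2⟩ := key (ne_of_gt hpos)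
    have h2' : ∀ i, Tendsto (fun n => U n i / euclNorm (U n)) atTop
        (nhds (e i / euclNorm e)) := by
      intro i
      have := h2 i
      rwa [abs_of_pos hpos, mul_div_mul_left _ _ (ne_of_gt hpos)] at this
    refine ⟨h1, h2', ?_⟩
    have hev : ∀ i, ∀ᶠ n in atTop, 0 < U n i := by
      intro i
      have hlt : (0 : ℝ) < e i / euclNorm e := div_pos (he i) hEe
      have := (h2' i).eventually (eventually_gt_nhds hlt)
      filter_upwards [this] with n hn
      have hEn : 0 < euclNorm (U n) := euclNorm_pos (h1 n)
      have := mul_pos hn hEn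
      rwa [div_mul_cancel₀ _ hEn.ne'] at this
    have := (eventually_all.mpr hev)
    obtain ⟨N, hN⟩ := eventually_atTop.mp this
    exact ⟨N, hN⟩
  · intro hneg
    obtain ⟨h1, h2⟩ := key (ne_of_lt hneg)
    refine ⟨h1, fun i => ?_⟩
    have := h2 i
    have heq : c * e i / (|c| * euclNorm e) = -e i / euclNorm e := by
      rw [abs_of_neg hneg]
      rw [show -c * euclNorm e = -(c * euclNorm e) by ring, div_neg,
        mul_div_mul_left _ _ (ne_of_lt hneg), neg_div, ← neg_div]
    rwa [heq] at this
end

section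
/- (Soundness of positivity certificates, general m) Let (A(n))_{n∈ℕ} be d×d real matrices and (U_n)_{n∈ℕ} vectors in ℝ^d with U_{n+1} = A(n) U_n for all n. Let T be an invertible d×d real matrix, v ∈ ℝ^d with all coordinates positive, r > 1 a real number, N ∈ ℕ and m ≥ 1 an integer. Define C = { x ∈ ℝ^d : T x ∈ B_r(v) }. Assume: (i) every x ∈ C has all coordinates positive; (ii) all coordinates of U_n are nonnegative for every n ≤ N; (iii) U_j ∈ C for every j with N ≤ j ≤ N + m − 1; (iv) for every n ≥ N and every x ∈ C, the vector A(n+m−1) A(n+m−2) ⋯ A(n) x belongs to C. Then all coordinates of U_n are nonnegative for every n ∈ ℕ, and all coordinates of U_n are positive for every n ≥ N. -/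
open Matrix

/-- `iterApply A n k x = A(n+k−1) A(n+k−2) ⋯ A(n) x`. -/
def iterApply {d : ℕ} (A : ℕ → Matrix (Fin d) (Fin d) ℝ) (n : ℕ) :
    ℕ → (Fin d → ℝ) → Fin d → ℝ
  | 0, x => x
  | k + 1, x => (A (n + k)).mulVec (iterApply A n k x)

/-- Soundness of positivity certificates (general `m ≥ 1`): if the cone
`C = T⁻¹(B_r(v))` is contained in the positive orthant, `U_n ≥ 0` for `n ≤ N`,
`U_j ∈ C` for `N ≤ j ≤ N + m − 1`, and `A(n+m−1) ⋯ A(n)` maps `C` into itself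
for every `n ≥ N`, then `U_n ≥ 0` for all `n` and `U_n > 0` for `n ≥ N`. -/
theorem certificate_sound_general {d : ℕ} (A : ℕ → Matrix (Fin d) (Fin d) ℝ)
    (U : ℕ → Fin d → ℝ) (hU : ∀ n, U (n + 1) = (A n).mulVec (U n))
    (T : Matrix (Fin d) (Fin d) ℝ) (hT : IsUnit T)
    (v : Fin d → ℝ) (hv : ∀ i, 0 < v i) (r : ℝ) (hr : 1 < r)
    (N m : ℕ) (hm : 1 ≤ m)
    (hCpos : ∀ x : Fin d → ℝ, T.mulVec x ∈ coneBr r v → ∀ i, 0 < x i)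
    (hinit : ∀ n ≤ N, ∀ i, 0 ≤ U n i)
    (hUinit : ∀ j, N ≤ j → j ≤ N + m - 1 → T.mulVec (U j) ∈ coneBr r v)
    (hstep : ∀ n ≥ N, ∀ x : Fin d → ℝ, T.mulVec x ∈ coneBr r v →
      T.mulVec (iterApply A n m x) ∈ coneBr r v) :
    (∀ n, ∀ i, 0 ≤ U n i) ∧ ∀ n ≥ N, ∀ i, 0 < U n i := by
  have hiter : ∀ k n, U (n + k) = iterApply A n k (U n) := by
    intro k
    induction k with
    | zero => intro n; rfl
    | succ k ih =>
      intro n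
      show U ((n + k) + 1) = (A (n + k)).mulVec (iterApply A n k (U n))
      rw [hU, ih]
  have hC : ∀ j, T.mulVec (U (N + j)) ∈ coneBr r v := by
    intro j
    induction j using Nat.strong_induction_on with
    | _ j ih =>
      by_cases h : j ≤ m - 1
      · exact hUinit (N + j) (Nat.le_add_right _ _)
          (by omega)
      · have hm' : m ≤ j := by omega
        have : N + j = (N + (j - m)) + m := by omega
        rw [this, hiter]
        exact hstep (N + (j - m)) (Nat.le_add_right _ _) _ (ih (j - m) (by omega))
  have hpos : ∀ n ≥ N, ∀ i, 0 < U n i := by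
    intro n hn i
    have := hC (n - N)
    rw [show N + (n - N) = n by omega] at this
    exact hCpos _ this i
  refine ⟨fun n i => ?_, hpos⟩
  rcases le_or_gt n N with h | h
  · exact hinit n h i
  · exact (hpos n h.le i).le
end

section
/- Let d ≥ 2, let v ∈ ℝ^d have all coordinates positive, and let r > 1 be a real number. Let G be the set of vectors g ∈ ℝ^d such that g_i ∈ {v_i, r·v_i} for every i, excluding the two vectors v and r·v (so G has 2^d − 2 elements). Then B_r(v) equals the set of all vectors of the form Σ_{g∈G} c_g · g where the coefficients c_g are nonnegative reals, not all zero; i.e., the cone B_r(v) is generated by these 2^d − 2 vectors. -/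
/-- The generator of `B_r(v)` indexed by `ε : Fin d → Bool`: its `i`-th
coordinate is `r v_i` if `ε i` and `v_i` otherwise. -/
def coneGen {d : ℕ} (r : ℝ) (v : Fin d → ℝ) (ε : Fin d → Bool) : Fin d → ℝ :=
  fun i => if ε i then r * v i else v i

def boolFinsetEquiv (d : ℕ) : (Fin d → Bool) ≃ Finset (Fin d) where
  toFun ε := Finset.univ.filter fun i => ε i = true
  invFun S := fun i => decide (i ∈ S)
  left_inv := by intro ε; funext i; by_cases h : ε i <;> simp [h]
  right_inv := by intro S; ext i; simp

lemma decomp {d : ℕ} : ∀ (n : ℕ) (s : Fin d → ℝ) (B : ℝ),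
    (∀ i, 0 ≤ s i) → (∀ i, s i ≤ B) → (∃ j, s j = B) →
    (Finset.univ.filter fun i => s i ≠ 0).card ≤ n →
    ∃ a : Finset (Fin d) → ℝ,
      (∀ S, 0 ≤ a S) ∧ (∀ S, a S ≠ 0 → S.Nonempty) ∧
      (∀ i, s i = ∑ S : Finset (Fin d), a S * (if i ∈ S then 1 else 0)) ∧
      (∑ S : Finset (Fin d), a S) = B := by
  intro n
  induction n with
  | zero =>
    intro s B h0 hB hex hc
    obtain ⟨j, hj⟩ := hex
    have hall : ∀ i, s i = 0 := by
      intro i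
      by_contra h
      have : i ∈ Finset.univ.filter fun i => s i ≠ 0 := by simp [h]
      have := Finset.card_pos.mpr ⟨i, this⟩
      omega
    refine ⟨0, by simp, by simp, by simp [hall], by simp [← hj, hall j]⟩
  | succ n ih =>
    intro s B h0 hB hex hc
    obtain ⟨j, hj⟩ := hex
    set T := Finset.univ.filter fun i => s i ≠ 0 with hT
    by_cases hTe : T = ∅
    · have hall : ∀ i, s i = 0 := by
        intro i
        by_contra h
        have : i ∈ T := by simp [hT, h]
        simp [hTe] at this
      refine ⟨0, by simp, by simp, by simp [hall], by simp [← hj, hall j]⟩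
    · have hTne : T.Nonempty := Finset.nonempty_of_ne_empty hTe
      obtain ⟨i₀, hi₀T, hi₀min⟩ := T.exists_min_image s hTne
      set m := s i₀ with hm
      have hi₀ : s i₀ ≠ 0 := by
        have := hi₀T; simp [hT] at this; exact this
      have hm0 : 0 < m := lt_of_le_of_ne (h0 i₀) (Ne.symm hi₀)
      have hmB : m ≤ B := hj ▸ hB i₀
      have hjT : j ∈ T := by
        have : s j ≠ 0 := by rw [hj]; exact ne_of_gt (lt_of_lt_of_le hm0 hmB)
        simp [hT, this]
      set s' : Fin d → ℝ := fun i => s i - if i ∈ T then m else 0 with hs'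
      have hnotT : ∀ i, i ∉ T → s i = 0 := by
        intro i hi; by_contra h; exact hi (by simp [hT, h])
      have h0' : ∀ i, 0 ≤ s' i := by
        intro i
        by_cases hi : i ∈ T
        · simp [hs', hi]; exact hi₀min i hi
        · simp [hs', hi, hnotT i hi]
      have hB' : ∀ i, s' i ≤ B - m := by
        intro i
        by_cases hi : i ∈ T
        · simp [hs', hi]; exact hB i
        · simp [hs', hi, hnotT i hi]; linarith
      have hex' : ∃ k, s' k = B - m := ⟨j, by simp [hs', hjT, hj]⟩
      have hc' : (Finset.univ.filter fun i => s' i ≠ 0).card ≤ n := by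
        have hsub : (Finset.univ.filter fun i => s' i ≠ 0) ⊆ T.erase i₀ := by
          intro i hi
          simp only [Finset.mem_filter] at hi
          have hiT : i ∈ T := by
            by_contra h
            exact hi.2 (by simp [hs', h, hnotT i h])
          refine Finset.mem_erase.mpr ⟨?_, hiT⟩
          intro h
          exact hi.2 (by simp [hs', h, hi₀T, hm])
        have := Finset.card_le_card hsub
        have h2 := Finset.card_erase_of_mem hi₀T
        have h3 : T.card ≤ n + 1 := hc
        have h4 : 1 ≤ T.card := Finset.card_pos.mpr hTne
        omega
      obtain ⟨a', ha0', hsupp', hrep', hsum'⟩ := ih s' (B - m) h0' hB' hex' hc'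
      refine ⟨fun S => a' S + if S = T then m else 0, ?_, ?_, ?_, ?_⟩
      · intro S
        by_cases h : S = T <;> simp [h]
        · linarith [ha0' T, hm0]
        · exact ha0' S
      · intro S hS
        by_cases h : S = T
        · exact h ▸ hTne
        · simp [h] at hS; exact hsupp' S hS
      · intro i
        have key : ∑ S : Finset (Fin d), (a' S + if S = T then m else 0) * (if i ∈ S then 1 else 0)
            = (∑ S : Finset (Fin d), a' S * (if i ∈ S then 1 else 0))
              + (if i ∈ T then m else 0) := by
          simp only [add_mul, Finset.sum_add_distrib, ite_mul, zero_mul]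
          congr 1
          rw [Fintype.sum_ite_eq' T (fun S => m * if i ∈ S then 1 else 0)]
          by_cases h : i ∈ T <;> simp [h]
        have h1 : s i = s' i + if i ∈ T then m else 0 := by simp [hs']
        rw [h1, hrep' i]
        exact key.symm
      · rw [Finset.sum_add_distrib, hsum', Fintype.sum_ite_eq' T (fun _ => m)]
        ring

/-- The cone `B_r(v)` is generated by the `2^d − 2` vectors whose `i`-th
coordinate is `v_i` or `r v_i`, excluding `v` (all coordinates `v_i`) and
`r • v` (all coordinates `r v_i`): it equals the set of nonnegative
combinations, with not all coefficients zero, of these generators. -/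
theorem coneBr_eq_generated {d : ℕ} (hd : 2 ≤ d) (v : Fin d → ℝ)
    (hv : ∀ i, 0 < v i) (r : ℝ) (hr : 1 < r) :
    coneBr r v = {x | ∃ c : (Fin d → Bool) → ℝ,
      (∀ ε, 0 ≤ c ε) ∧
      c (fun _ => false) = 0 ∧ c (fun _ => true) = 0 ∧
      (∃ ε, c ε ≠ 0) ∧
      x = ∑ ε : Fin d → Bool, c ε • coneGen r v ε} := by
  haveI : Nonempty (Fin d) := ⟨⟨0, by omega⟩⟩
  have hr0 : (0:ℝ) < r := by linarith
  have hr1 : (0:ℝ) < r - 1 := by linarith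
  have hrp1 : (0:ℝ) < r + 1 := by linarith
  ext x
  simp only [coneBr, Set.mem_setOf_eq]
  constructor
  · rintro ⟨hx, hineq⟩
    obtain ⟨j, -, hjmax⟩ := Finset.exists_max_image Finset.univ (fun i => x i / v i)
      Finset.univ_nonempty
    set M := x j / v j with hM
    have hM0 : 0 < M := div_pos (hx j) (hv j)
    set s : Fin d → ℝ := fun i => x i / v i - M / r with hs
    have h0 : ∀ i, 0 ≤ s i := by
      intro i
      have h := hineq j i
      have h2 : M / r ≤ x i / v i := by
        rw [hM, div_le_div_iff₀ (by positivity) (hv i)]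
        rw [div_mul_eq_mul_div, div_le_iff₀ (hv j)]
        nlinarith
      simp only [hs]
      linarith
    have hBle : ∀ i, s i ≤ M - M / r := by
      intro i
      have := hjmax i (Finset.mem_univ i)
      simp only [hs]
      linarith
    have hBex : ∃ k, s k = M - M / r := ⟨j, by simp [hs, hM]⟩
    have hcard : (Finset.univ.filter fun i => s i ≠ 0).card ≤ d := by
      have := Finset.card_le_univ (Finset.univ.filter fun i => s i ≠ 0)
      simpa using this
    obtain ⟨a, ha0, hsupp, hrep, hsum⟩ := decomp d s (M - M / r) h0 hBle hBex hcard
    set i0 : Fin d := ⟨0, by omega⟩ with hi0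
    set i1 : Fin d := ⟨1, by omega⟩ with hi1
    set P : Finset (Fin d) := {i0} with hP
    have hPU : P ≠ Finset.univ := by
      intro h
      have : i1 ∈ P := h ▸ Finset.mem_univ i1
      simp [hP, hi0, hi1, Fin.ext_iff] at this
    have hPcU : Pᶜ ≠ Finset.univ := by
      intro h
      have : i0 ∈ Pᶜ := h ▸ Finset.mem_univ i0
      simp [hP] at this
    have hPne : P ≠ ∅ := Finset.singleton_ne_empty _
    have hPcne : Pᶜ ≠ ∅ := by
      have : i1 ∈ Pᶜ := by simp [hP, hi0, hi1, Fin.ext_iff]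
      exact Finset.ne_empty_of_mem this
    have hPPc : P ≠ Pᶜ := by
      intro h
      have : i0 ∈ Pᶜ := h ▸ Finset.mem_singleton_self i0
      simp [hP] at this
    have haE : a ∅ = 0 := by
      by_contra h
      exact absurd (hsupp ∅ h) (by simp)
    set q : ℝ := a Finset.univ * r / (r + 1) with hq
    have hq0 : 0 ≤ q := div_nonneg (mul_nonneg (ha0 _) hr0.le) hrp1.le
    set b : Finset (Fin d) → ℝ := fun S =>
      (if S = Finset.univ then 0 else a S)
        + ((if S = P then q else 0) + (if S = Pᶜ then q else 0)) with hb
    have hb0 : ∀ S, 0 ≤ b S := by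
      intro S
      have h1 : 0 ≤ (if S = Finset.univ then 0 else a S) := by
        split_ifs; exacts [le_refl 0, ha0 S]
      have h2 : 0 ≤ (if S = P then q else 0) := by split_ifs; exacts [hq0, le_refl 0]
      have h3 : 0 ≤ (if S = Pᶜ then q else 0) := by split_ifs; exacts [hq0, le_refl 0]
      simp only [hb]
      linarith
    have hbsum : ∑ S : Finset (Fin d), b S
        = (M - M / r) - a Finset.univ + q + q := by
      simp only [hb]
      rw [Finset.sum_add_distrib, Finset.sum_add_distrib]
      rw [Fintype.sum_ite_eq' P (fun _ => q), Fintype.sum_ite_eq' Pᶜ (fun _ => q)]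
      have h3 : ∀ S : Finset (Fin d), (if S = Finset.univ then 0 else a S)
          = a S - (if S = Finset.univ then a S else 0) := by
        intro S; split_ifs <;> ring
      rw [Finset.sum_congr rfl (fun S _ => h3 S), Finset.sum_sub_distrib,
        Fintype.sum_ite_eq' Finset.univ a, hsum]
      ring
    have hbind : ∀ i, ∑ S : Finset (Fin d), b S * (if i ∈ S then 1 else 0)
        = s i - a Finset.univ + q := by
      intro i
      simp only [hb, add_mul]
      rw [Finset.sum_add_distrib, Finset.sum_add_distrib]
      have e1 : ∑ S : Finset (Fin d),
          (if S = Finset.univ then 0 else a S) * (if i ∈ S then 1 else 0)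
          = s i - a Finset.univ := by
        have h3 : ∀ S : Finset (Fin d),
            (if S = Finset.univ then 0 else a S) * (if i ∈ S then 1 else 0)
            = a S * (if i ∈ S then 1 else 0)
              - (if S = Finset.univ then a S * (if i ∈ S then 1 else 0) else 0) := by
          intro S; split_ifs <;> ring
        rw [Finset.sum_congr rfl (fun S _ => h3 S), Finset.sum_sub_distrib,
          Fintype.sum_ite_eq' Finset.univ (fun S => a S * (if i ∈ S then 1 else 0)),
          ← hrep i]
        simp
      have e2 : ∑ S : Finset (Fin d), (if S = P then q else 0) * (if i ∈ S then 1 else 0)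
          = q * (if i ∈ P then 1 else 0) := by
        have h3 : ∀ S : Finset (Fin d),
            (if S = P then q else 0) * (if i ∈ S then 1 else 0)
            = (if S = P then q * (if i ∈ S then 1 else 0) else 0) := by
          intro S; split_ifs <;> ring
        rw [Finset.sum_congr rfl (fun S _ => h3 S),
          Fintype.sum_ite_eq' P (fun S => q * (if i ∈ S then 1 else 0))]
      have e3 : ∑ S : Finset (Fin d), (if S = Pᶜ then q else 0) * (if i ∈ S then 1 else 0)
          = q * (if i ∈ Pᶜ then 1 else 0) := by
        have h3 : ∀ S : Finset (Fin d),
            (if S = Pᶜ then q else 0) * (if i ∈ S then 1 else 0)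
            = (if S = Pᶜ then q * (if i ∈ S then 1 else 0) else 0) := by
          intro S; split_ifs <;> ring
        rw [Finset.sum_congr rfl (fun S _ => h3 S),
          Fintype.sum_ite_eq' Pᶜ (fun S => q * (if i ∈ S then 1 else 0))]
      rw [e1, e2, e3]
      by_cases h : i ∈ P
      · rw [if_pos h, if_neg (by simp [Finset.mem_compl, h])]
        ring
      · rw [if_neg h, if_pos (by simp [Finset.mem_compl, h])]
        ring
    refine ⟨fun ε => b (boolFinsetEquiv d ε) / (r - 1), ?_, ?_, ?_, ?_, ?_⟩
    · intro ε
      exact div_nonneg (hb0 _) hr1.le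
    · have he : boolFinsetEquiv d (fun _ => false) = ∅ := by
        ext i; simp [boolFinsetEquiv]
      show b (boolFinsetEquiv d (fun _ => false)) / (r - 1) = 0
      rw [he]
      have : b ∅ = 0 := by
        simp only [hb, if_neg (Ne.symm (Finset.univ_nonempty.ne_empty)),
          if_neg (Ne.symm hPne), if_neg (Ne.symm hPcne), haE]
        ring
      rw [this]
      simp
    · have he : boolFinsetEquiv d (fun _ => true) = Finset.univ := by
        ext i; simp [boolFinsetEquiv]
      show b (boolFinsetEquiv d (fun _ => true)) / (r - 1) = 0
      rw [he]
      have : b Finset.univ = 0 := by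
        simp only [hb, if_neg (Ne.symm hPU), if_neg (Ne.symm hPcU)]
        simp
      rw [this]
      simp
    · have hBpos : 0 < M - M / r := by
        have : M / r < M := div_lt_self hM0 hr
        linarith
      have hex : ∃ S, a S ≠ 0 := by
        by_contra h
        push_neg at h
        simp only [h, Finset.sum_const_zero] at hsum
        linarith
      obtain ⟨S, hS⟩ := hex
      have haS : 0 < a S := lt_of_le_of_ne (ha0 S) (Ne.symm hS)
      by_cases hSU : S = Finset.univ
      · refine ⟨(boolFinsetEquiv d).symm P, ?_⟩
        show b (boolFinsetEquiv d ((boolFinsetEquiv d).symm P)) / (r - 1) ≠ 0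
        rw [Equiv.apply_symm_apply]
        have hq' : 0 < q := by
          rw [hq]
          exact div_pos (mul_pos (hSU ▸ haS) hr0) hrp1
        have hbP : 0 < b P := by
          have h1 : b P = a P + q := by
            simp only [hb]
            rw [if_neg hPU, if_neg hPPc]
            simp
          rw [h1]
          linarith [ha0 P]
        exact ne_of_gt (div_pos hbP hr1)
      · refine ⟨(boolFinsetEquiv d).symm S, ?_⟩
        show b (boolFinsetEquiv d ((boolFinsetEquiv d).symm S)) / (r - 1) ≠ 0
        rw [Equiv.apply_symm_apply]
        have hbS : 0 < b S := by
          simp only [hb, if_neg hSU]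
          have h2 : 0 ≤ (if S = P then q else 0) := by split_ifs; exacts [hq0, le_refl 0]
          have h3 : 0 ≤ (if S = Pᶜ then q else 0) := by split_ifs; exacts [hq0, le_refl 0]
          linarith
        exact ne_of_gt (div_pos hbS hr1)
    · funext i
      rw [Finset.sum_apply]
      simp only [Pi.smul_apply, smul_eq_mul]
      have hgen : ∀ ε : Fin d → Bool, coneGen r v ε i
          = v i + (r - 1) * v i * (if i ∈ boolFinsetEquiv d ε then 1 else 0) := by
        intro ε
        simp only [coneGen, boolFinsetEquiv, Equiv.coe_fn_mk, Finset.mem_filter,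
          Finset.mem_univ, true_and]
        by_cases h : ε i <;> simp [h] <;> ring
      have step1 : ∑ ε : Fin d → Bool,
          b (boolFinsetEquiv d ε) / (r - 1) * coneGen r v ε i
          = ∑ ε : Fin d → Bool,
            (b (boolFinsetEquiv d ε) / (r - 1) * v i
              + b (boolFinsetEquiv d ε) * v i
                * (if i ∈ boolFinsetEquiv d ε then 1 else 0)) := by
        refine Finset.sum_congr rfl fun ε _ => ?_
        rw [hgen ε]
        generalize (if i ∈ boolFinsetEquiv d ε then (1:ℝ) else 0) = χ
        generalize b (boolFinsetEquiv d ε) = t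
        field_simp
      rw [step1, Finset.sum_add_distrib]
      have hcomp1 : ∑ ε : Fin d → Bool, b (boolFinsetEquiv d ε) / (r - 1) * v i
          = ∑ S : Finset (Fin d), b S / (r - 1) * v i :=
        Fintype.sum_equiv (boolFinsetEquiv d) _ _ fun ε => rfl
      have hcomp2 : ∑ ε : Fin d → Bool,
          b (boolFinsetEquiv d ε) * v i * (if i ∈ boolFinsetEquiv d ε then 1 else 0)
          = ∑ S : Finset (Fin d), b S * v i * (if i ∈ S then 1 else 0) :=
        Fintype.sum_equiv (boolFinsetEquiv d) _ _ fun ε => rfl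
      rw [hcomp1, hcomp2]
      have hA : ∑ S : Finset (Fin d), b S / (r - 1) * v i
          = (∑ S : Finset (Fin d), b S) / (r - 1) * v i := by
        rw [← Finset.sum_mul, ← Finset.sum_div]
      have hB2 : ∑ S : Finset (Fin d), b S * v i * (if i ∈ S then 1 else 0)
          = v i * ∑ S : Finset (Fin d), b S * (if i ∈ S then 1 else 0) := by
        rw [Finset.mul_sum]
        exact Finset.sum_congr rfl fun S _ => by ring
      rw [hA, hB2, hbsum, hbind i]
      simp only [hs, hq]
      have hvi : v i ≠ 0 := (hv i).ne'
      field_simp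
      ring
  · rintro ⟨c, hc0, hcf, hct, ⟨ε₀, hε₀⟩, rfl⟩
    have hgpos : ∀ (ε : Fin d → Bool) i, 0 < coneGen r v ε i := by
      intro ε i
      simp only [coneGen]
      split_ifs
      · exact mul_pos hr0 (hv i)
      · exact hv i
    have happ : ∀ i, (∑ ε : Fin d → Bool, c ε • coneGen r v ε) i
        = ∑ ε : Fin d → Bool, c ε * coneGen r v ε i := by
      intro i
      rw [Finset.sum_apply]
      simp [Pi.smul_apply, smul_eq_mul]
    constructor
    · intro i
      rw [happ]
      have hpos : 0 < c ε₀ * coneGen r v ε₀ i :=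
        mul_pos (lt_of_le_of_ne (hc0 ε₀) (Ne.symm hε₀)) (hgpos ε₀ i)
      have h2 : c ε₀ * coneGen r v ε₀ i ≤ ∑ ε : Fin d → Bool, c ε * coneGen r v ε i :=
        Finset.single_le_sum (f := fun ε => c ε * coneGen r v ε i)
          (fun ε _ => mul_nonneg (hc0 ε) (hgpos ε i).le) (Finset.mem_univ ε₀)
      linarith
    · intro i j
      rw [happ i, happ j, Finset.sum_mul, Finset.sum_mul, Finset.mul_sum]
      apply Finset.sum_le_sum
      intro ε _
      have hi := hv i
      have hj := hv j
      have hcε := hc0 ε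
      simp only [coneGen]
      split_ifs <;>
        nlinarith [mul_nonneg (mul_nonneg hcε hi.le) hj.le,
          mul_nonneg (mul_nonneg (mul_nonneg (mul_pos hr0 hr1).le hcε) hi.le) hj.le,
          mul_nonneg (mul_nonneg (mul_nonneg hr1.le hcε) hi.le) hj.le]
end

section
/- Let M be a d×d real matrix with all entries positive, let μ ∈ ℝ, and let v ∈ ℝ^d be a nonzero vector with M v = μ v. If |μ| equals the spectral radius of M (i.e., |μ| ≥ |ν| for every complex eigenvalue ν of M), then μ > 0 and either v or −v has all coordinates positive. -/
open Matrix Polynomial Filter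

attribute [local instance] Matrix.linftyOpNormedRing Matrix.linftyOpNormedAlgebra

lemma isRoot_charpoly_of_mem_spectrum {n : Type*} [Fintype n] [DecidableEq n]
    {A : Matrix n n ℂ} {z : ℂ} (hz : z ∈ spectrum ℂ A) : A.charpoly.IsRoot z := by
  rw [spectrum.mem_iff] at hz
  rw [Polynomial.IsRoot]
  by_contra h
  apply hz
  rw [Matrix.isUnit_iff_isUnit_det, isUnit_iff_ne_zero]
  have hdet : (algebraMap ℂ (Matrix n n ℂ) z - A).det = A.charpoly.eval z := by
    rw [Matrix.charpoly, ← Polynomial.coe_evalRingHom, RingHom.map_det]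
    congr 1
    ext i j
    by_cases hij : i = j <;>
      simp [hij, Matrix.charmatrix_apply, Matrix.algebraMap_matrix_apply,
        Matrix.diagonal, Matrix.sub_apply]
  rw [hdet]; exact h

lemma gelfand_contradiction {d : ℕ} (hd : 1 ≤ d) (M : Matrix (Fin d) (Fin d) ℝ)
    (hMnn : ∀ i j, 0 ≤ M i j) (a r : ℝ) (ha : 0 ≤ a) (har : a < r)
    (u : Fin d → ℝ) (hu : ∀ i, 0 < u i) (hru : ∀ i, r * u i ≤ (M *ᵥ u) i)
    (hspec : ∀ ν : ℂ, (M.charpoly.map (algebraMap ℝ ℂ)).IsRoot ν →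
      ‖ν‖ ≤ a) : False := by
  classical
  have hr : 0 < r := lt_of_le_of_lt ha har
  set f : ℝ →+* ℂ := algebraMap ℝ ℂ
  set A : Matrix (Fin d) (Fin d) ℂ := M.map f with hA
  have hAn : ∀ n : ℕ, A ^ n = (M ^ n).map f := by
    intro n
    rw [hA, ← RingHom.mapMatrix_apply, ← RingHom.mapMatrix_apply, ← map_pow]
  -- powers lower bound
  have hmv : ∀ (N : Matrix (Fin d) (Fin d) ℝ) (x : Fin d → ℝ) (i : Fin d),
      (N *ᵥ x) i = ∑ j, N i j * x j := fun N x i => rfl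
  have hpow : ∀ n : ℕ, ∀ i, r ^ n * u i ≤ ((M ^ n) *ᵥ u) i := by
    intro n
    induction n with
    | zero => intro i; simp [Matrix.one_mulVec]
    | succ n ih =>
      intro i
      have h1 : ((M ^ (n+1)) *ᵥ u) i = (M *ᵥ ((M ^ n) *ᵥ u)) i := by
        rw [pow_succ', ← Matrix.mulVec_mulVec]
      rw [h1, hmv]
      calc r ^ (n+1) * u i = r ^ n * (r * u i) := by ring
        _ ≤ r ^ n * ((M *ᵥ u) i) :=
            mul_le_mul_of_nonneg_left (hru i) (pow_nonneg hr.le n)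
        _ = ∑ j, M i j * (r ^ n * u j) := by
            rw [hmv, Finset.mul_sum]; exact Finset.sum_congr rfl fun j _ => by ring
        _ ≤ ∑ j, M i j * (((M ^ n) *ᵥ u) j) :=
            Finset.sum_le_sum fun j _ => mul_le_mul_of_nonneg_left (ih j) (hMnn i j)
  -- norm lower bound
  have hdpos : 0 < d := hd
  set i0 : Fin d := ⟨0, hdpos⟩
  set uC : Fin d → ℂ := fun j => ((u j : ℝ) : ℂ) with huC
  have huC0 : uC ≠ 0 := by
    intro h
    have := congrFun h i0
    simp only [uC, Pi.zero_apply, Complex.ofReal_eq_zero] at this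
    exact (hu i0).ne' this
  have hK : 0 < ‖uC‖ := norm_pos_iff.2 huC0
  have hnorm : ∀ n : ℕ, r ^ n * u i0 ≤ ‖A ^ n‖ * ‖uC‖ := by
    intro n
    have h1 : ((A ^ n) *ᵥ uC) i0 = ((((M ^ n) *ᵥ u) i0 : ℝ) : ℂ) := by
      rw [hAn, show uC = ⇑f ∘ u by ext j; simp [huC, f, Complex.coe_algebraMap]]
      exact (RingHom.map_mulVec f (M ^ n) u i0).symm
    calc r ^ n * u i0 ≤ ((M ^ n) *ᵥ u) i0 := hpow n i0
      _ ≤ ‖((A ^ n) *ᵥ uC) i0‖ := by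
          rw [h1, Complex.norm_real, Real.norm_eq_abs]; exact le_abs_self _
      _ ≤ ‖(A ^ n) *ᵥ uC‖ := norm_le_pi_norm _ i0
      _ ≤ ‖A ^ n‖ * ‖uC‖ := Matrix.linfty_opNorm_mulVec _ _
  -- spectral radius bound
  have hrad : spectralRadius ℂ A ≤ ENNReal.ofReal a := by
    rw [spectralRadius]
    refine iSup₂_le fun z hz => ?_
    have hroot : A.charpoly.IsRoot z := isRoot_charpoly_of_mem_spectrum hz
    rw [hA, Matrix.charpoly_map] at hroot
    have hza : ‖z‖ ≤ a := by
      simpa using hspec z hroot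
    rw [show ((‖z‖₊ : NNReal) : ENNReal) = ENNReal.ofReal ‖z‖ from
      (ENNReal.ofReal_eq_coe_nnreal (norm_nonneg z)).symm]
    exact ENNReal.ofReal_le_ofReal hza
  -- Gelfand
  set r' : ℝ := (a + r) / 2 with hr'
  have har' : a < r' := by rw [hr']; linarith
  have hr'r : r' < r := by rw [hr']; linarith
  have hr'pos : 0 < r' := lt_of_le_of_lt ha har'
  have htend := spectrum.pow_nnnorm_pow_one_div_tendsto_nhds_spectralRadius A
  have hlt : spectralRadius ℂ A < ENNReal.ofReal r' :=
    lt_of_le_of_lt hrad ((ENNReal.ofReal_lt_ofReal_iff hr'pos).2 har')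
  have hev : ∀ᶠ n : ℕ in atTop, ((‖A ^ n‖₊ : ENNReal)) ^ (1/(n:ℝ)) < ENNReal.ofReal r' :=
    htend.eventually_lt_const hlt
  have hev2 : ∀ᶠ n : ℕ in atTop, ‖A ^ n‖ ≤ r' ^ n := by
    filter_upwards [hev, Filter.eventually_ge_atTop 1] with n h1 h2
    have hn0 : (n : ℝ) ≠ 0 := by positivity
    have e1 : ((‖A ^ n‖₊ : ENNReal)) ^ (1/(n:ℝ)) = ENNReal.ofReal (‖A ^ n‖ ^ (1/(n:ℝ))) := by
      rw [show ((‖A ^ n‖₊ : NNReal) : ENNReal) = ENNReal.ofReal ‖A ^ n‖ from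
          (ENNReal.ofReal_eq_coe_nnreal (norm_nonneg _)).symm,
        ENNReal.ofReal_rpow_of_nonneg (norm_nonneg _) (by positivity)]
    rw [e1] at h1
    have h3 : ‖A ^ n‖ ^ (1/(n:ℝ)) < r' :=
      (ENNReal.ofReal_lt_ofReal_iff_of_nonneg (by positivity)).1 h1
    have h4 : (‖A ^ n‖ ^ (1/(n:ℝ))) ^ (n:ℝ) ≤ r' ^ (n:ℝ) :=
      Real.rpow_le_rpow (by positivity) h3.le (by positivity)
    rw [← Real.rpow_mul (norm_nonneg _), one_div, inv_mul_cancel₀ hn0,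
      Real.rpow_one, Real.rpow_natCast] at h4
    exact h4
  have hq : Tendsto (fun n : ℕ => (r'/r) ^ n) atTop (nhds 0) :=
    tendsto_pow_atTop_nhds_zero_of_lt_one (div_nonneg hr'pos.le hr.le) ((div_lt_one hr).2 hr'r)
  have hev3 : ∀ᶠ n : ℕ in atTop, (r'/r) ^ n < u i0 / ‖uC‖ :=
    hq.eventually_lt_const (div_pos (hu i0) hK)
  obtain ⟨n, h1, h2⟩ := (hev2.and hev3).exists
  have h5 := hnorm n
  have h6 : r ^ n * u i0 ≤ r' ^ n * ‖uC‖ :=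
    h5.trans (mul_le_mul_of_nonneg_right h1 hK.le)
  have h7 : u i0 / ‖uC‖ ≤ (r'/r) ^ n := by
    rw [div_pow, div_le_div_iff₀ hK (pow_pos hr n)]
    nlinarith
  linarith


/-- Perron-type statement: if `M` is a positive matrix, `v ≠ 0` is a real
eigenvector for the eigenvalue `μ`, and `|μ|` is the spectral radius of `M`
(i.e. `|ν| ≤ |μ|` for every complex eigenvalue `ν` of `M`), then `μ > 0` and
either `v` or `−v` has all coordinates positive. -/
theorem perron_eigenvector_pos {d : ℕ} (hd : 1 ≤ d)
    (M : Matrix (Fin d) (Fin d) ℝ) (hM : ∀ i j, 0 < M i j)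
    (μ : ℝ) (v : Fin d → ℝ) (hv : v ≠ 0) (heig : M.mulVec v = μ • v)
    (hspec : ∀ ν : ℂ, (M.charpoly.map (algebraMap ℝ ℂ)).IsRoot ν →
      ‖ν‖ ≤ |μ|) :
    0 < μ ∧ ((∀ i, 0 < v i) ∨ (∀ i, v i < 0)) := by
  classical
  have hmv : ∀ (x : Fin d → ℝ) (i : Fin d), (M *ᵥ x) i = ∑ j, M i j * x j :=
    fun x i => rfl
  set w : Fin d → ℝ := fun i => |v i| with hwdef
  have hw0 : ∀ i, 0 ≤ w i := fun i => abs_nonneg _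
  have heig' : ∀ i, (M *ᵥ v) i = μ * v i := fun i => by rw [heig]; rfl
  obtain ⟨k, hk⟩ : ∃ k, v k ≠ 0 := by
    by_contra h; push_neg at h; exact hv (funext h)
  have hwk : 0 < w k := abs_pos.2 hk
  have hpos : ∀ (x : Fin d → ℝ), (∀ j, 0 ≤ x j) → ∀ k0, 0 < x k0 →
      ∀ i, 0 < (M *ᵥ x) i := by
    intro x hx k0 hk0 i
    rw [hmv]
    exact Finset.sum_pos' (fun j _ => mul_nonneg (hM i j).le (hx j))
      ⟨k0, Finset.mem_univ k0, mul_pos (hM i k0) hk0⟩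
  have hstep1 : ∀ i, |μ| * w i ≤ (M *ᵥ w) i := by
    intro i
    have e1 : |μ| * w i = |(M *ᵥ v) i| := by rw [heig' i, abs_mul]
    rw [e1, hmv, hmv]
    calc |∑ j, M i j * v j| ≤ ∑ j, |M i j * v j| := Finset.abs_sum_le_sum_abs _ _
      _ = ∑ j, M i j * w j := Finset.sum_congr rfl fun j _ => by
          rw [abs_mul, abs_of_pos (hM i j)]
  have hstep2 : ∀ i, (M *ᵥ w) i = |μ| * w i := by
    by_contra hcon
    push_neg at hcon
    obtain ⟨i1, hi1⟩ := hcon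
    have hi1' : |μ| * w i1 < (M *ᵥ w) i1 := lt_of_le_of_ne (hstep1 i1) (Ne.symm hi1)
    set u : Fin d → ℝ := fun i => (M *ᵥ w) i with hudef
    have hu : ∀ i, 0 < u i := hpos w hw0 k hwk
    have hkey : ∀ i, |μ| * u i < (M *ᵥ u) i := by
      intro i
      have hdiff : ∀ j, 0 ≤ u j - |μ| * w j := fun j => sub_nonneg.2 (hstep1 j)
      have e2 : (M *ᵥ u) i - |μ| * u i = (M *ᵥ (fun j => u j - |μ| * w j)) i := by
        simp only [hmv, hudef, mul_sub, Finset.sum_sub_distrib, Finset.mul_sum]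
        congr 1
        exact Finset.sum_congr rfl fun j _ => by ring
      have hp2 : 0 < (M *ᵥ (fun j => u j - |μ| * w j)) i :=
        hpos _ hdiff i1 (sub_pos.2 hi1') i
      linarith
    have hne : (Finset.univ : Finset (Fin d)).Nonempty := ⟨⟨0, hd⟩, Finset.mem_univ _⟩
    set r : ℝ := Finset.univ.inf' hne (fun i => (M *ᵥ u) i / u i) with hrdef
    have har : |μ| < r := by
      rw [hrdef, Finset.lt_inf'_iff]
      intro i _
      rw [lt_div_iff₀ (hu i)]
      linarith [hkey i]
    have hru : ∀ i, r * u i ≤ (M *ᵥ u) i := by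
      intro i
      have := Finset.inf'_le (fun i => (M *ᵥ u) i / u i) (Finset.mem_univ i)
      rw [← hrdef] at this
      calc r * u i ≤ ((M *ᵥ u) i / u i) * u i :=
            mul_le_mul_of_nonneg_right this (hu i).le
        _ = (M *ᵥ u) i := div_mul_cancel₀ _ (hu i).ne'
    exact gelfand_contradiction hd M (fun i j => (hM i j).le) |μ| r (abs_nonneg μ)
      har u hu hru hspec
  have hMw : ∀ i, 0 < (M *ᵥ w) i := hpos w hw0 k hwk
  have hapos : 0 < |μ| := by
    have h1 := hMw ⟨0, hd⟩
    rw [hstep2] at h1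
    nlinarith [abs_nonneg μ, hw0 (⟨0, hd⟩ : Fin d)]
  have hwpos : ∀ i, 0 < w i := by
    intro i
    have h1 := hMw i
    rw [hstep2] at h1
    nlinarith [abs_nonneg μ, hw0 i]
  have hvne : ∀ i, v i ≠ 0 := fun i => abs_pos.1 (hwpos i)
  have hsign : (∀ i, 0 < v i) ∨ (∀ i, v i < 0) := by
    by_cases hp : ∀ i, 0 < v i
    · exact Or.inl hp
    push_neg at hp
    obtain ⟨jm, hjm⟩ := hp
    have hjm' : v jm < 0 := lt_of_le_of_ne hjm (hvne jm)
    refine Or.inr fun i2 => ?_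
    by_contra hip
    push_neg at hip
    have hip' : 0 < v i2 := lt_of_le_of_ne hip (Ne.symm (hvne i2))
    have i0 : Fin d := ⟨0, hd⟩
    have habs : |∑ j, M i0 j * v j| = ∑ j, M i0 j * w j := by
      rw [← hmv, ← hmv, heig' i0, abs_mul, ← hstep2 i0]
    have h1 : ∑ j, M i0 j * v j < ∑ j, M i0 j * w j := by
      refine Finset.sum_lt_sum
        (fun j _ => mul_le_mul_of_nonneg_left (le_abs_self _) (hM i0 j).le)
        ⟨jm, Finset.mem_univ jm, mul_lt_mul_of_pos_left ?_ (hM i0 jm)⟩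
      calc v jm < 0 := hjm'
        _ < w jm := hwpos jm
    have h2 : -(∑ j, M i0 j * v j) < ∑ j, M i0 j * w j := by
      rw [← Finset.sum_neg_distrib]
      refine Finset.sum_lt_sum
        (fun j _ => ?_)
        ⟨i2, Finset.mem_univ i2, ?_⟩
      · rw [← mul_neg]
        exact mul_le_mul_of_nonneg_left (neg_le_abs _) (hM i0 j).le
      · rw [← mul_neg]
        refine mul_lt_mul_of_pos_left ?_ (hM i0 i2)
        calc -v i2 < 0 := neg_neg_iff_pos.2 hip'
          _ < w i2 := hwpos i2
    have h3 : |∑ j, M i0 j * v j| < ∑ j, M i0 j * w j := abs_lt.2 ⟨by linarith, h1⟩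
    linarith [habs, h3]
  refine ⟨?_, hsign⟩
  have i0 : Fin d := ⟨0, hd⟩
  rcases hsign with h | h
  · have h1 : 0 < (M *ᵥ v) i0 := hpos v (fun j => (h j).le) i0 (h i0) i0
    rw [heig' i0] at h1
    nlinarith [h i0]
  · have h1 : 0 < (M *ᵥ (fun j => -v j)) i0 :=
      hpos _ (fun j => neg_nonneg.2 (h j).le) i0 (neg_pos.2 (h i0)) i0
    have h2 : (M *ᵥ (fun j => -v j)) i0 = -(μ * v i0) := by
      rw [hmv, ← heig' i0, hmv]
      rw [← Finset.sum_neg_distrib]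
      exact Finset.sum_congr rfl fun j _ => by ring
    rw [h2] at h1
    nlinarith [h i0]
end
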